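/- Let F, k_f, ρ be positive integers with k_f ≥ 2, k_f ≤ F/2, and ρ ≤ F/(2·k_f), and let α ∈ (0,1]. Define h_x = Σ_{ℓ=0}^{x} C(x,ℓ)·α^ℓ·(1−α)^{x−ℓ}·(1 − C(F−ℓ−1, ρ−1)/C(F, ρ)). Then α − (h_{k_f} − (1−α)·h_{k_f−1}) ≥ (α·ρ/(2F))·e^{−2}. -/

import Mathlib

open Finset

private lemma exp_neg_two_le (m : ℕ) (hm : 1 ≤ m) :
    Real.exp (-2) ≤ (1 - 1/(m:ℝ)) ^ (m-1) := by
  rcases eq_or_lt_of_le hm with h1 | h2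
  · rw [← h1]
    norm_num
  · have hm2 : (2:ℝ) ≤ m := by exact_mod_cast h2
    have hm0 : (0:ℝ) < m := by linarith
    have hstep : Real.exp (-(2/(m:ℝ))) ≤ 1 - 1/m := by
      have h1 : 2/(m:ℝ) + 1 ≤ Real.exp (2/m) := Real.add_one_le_exp _
      have hpos : (0:ℝ) < 1 + 2/m := by positivity
      have h2' : Real.exp (-(2/(m:ℝ))) ≤ 1/(1+2/m) := by
        rw [Real.exp_neg, one_div]
        exact inv_anti₀ hpos (by linarith)
      have h3 : (1:ℝ)/(1+2/m) ≤ 1 - 1/m := by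
        rw [div_le_iff₀ hpos]
        have heq : (1 - 1/(m:ℝ)) * (1 + 2/m) = 1 + 2/m - 1/m - 2/(m*m) := by ring
        rw [heq]
        have hmm : 2/((m:ℝ)*m) ≤ 1/m := by
          rw [div_le_div_iff₀ (by positivity) hm0]
          nlinarith
        have h2m : 2/(m:ℝ) = 2*(1/m) := by ring
        linarith
      linarith
    have hbase : (0:ℝ) ≤ 1 - 1/m := by
      have : 1/(m:ℝ) ≤ 1/2 := by
        rw [div_le_div_iff₀ hm0 (by norm_num)]; linarith
      linarith
    have hexp : Real.exp (-2) = (Real.exp (-(2/(m:ℝ))))^m := by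
      rw [← Real.exp_nat_mul]
      congr 1
      field_simp
    rw [hexp]
    calc (Real.exp (-(2/(m:ℝ))))^m ≤ (1 - 1/(m:ℝ))^m :=
          pow_le_pow_left₀ (Real.exp_nonneg _) hstep m
      _ ≤ (1 - 1/(m:ℝ))^(m-1) := by
          apply pow_le_pow_of_le_one hbase _ (Nat.sub_le m 1)
          have : (0:ℝ) < 1/m := by positivity
          linarith

private lemma choose_ratio_ge (F kf ρ : ℕ) (hρ : 0 < ρ) (hkf : 2 ≤ kf)
    (h2k : 2 * kf ≤ F) (h2kρ : 2 * (kf * ρ) ≤ F) :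
    ((ρ:ℝ) / (2*F)) * Real.exp (-2) ≤ ((F - kf - 1).choose (ρ-1) : ℝ) / (F.choose ρ) := by
  have hρm : 2 * ρ ≤ kf * ρ := Nat.mul_le_mul_right ρ hkf
  have h4ρ : 4 * ρ ≤ F := by omega
  have hρkF : ρ + kf ≤ F := by omega
  have hF : 0 < F := by omega
  have hFpos : (0:ℝ) < F := by exact_mod_cast hF
  have hρpos : (0:ℝ) < ρ := by exact_mod_cast hρ
  have hCF : 0 < F.choose ρ := Nat.choose_pos (by omega)
  have hCF1 : 0 < (F-1).choose (ρ-1) := Nat.choose_pos (by omega)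
  have hCpos : (0:ℝ) < (F.choose ρ : ℝ) := by exact_mod_cast hCF
  have hR2pos : (0:ℝ) < ((F-1).choose (ρ-1) : ℝ) := by exact_mod_cast hCF1
  -- ρ * C(F,ρ) = F * C(F-1,ρ-1)
  have hid : ρ * F.choose ρ = F * (F-1).choose (ρ-1) := by
    have h := Nat.add_one_mul_choose_eq (F-1) (ρ-1)
    have hF' : F-1+1 = F := by omega
    have hρ' : ρ-1+1 = ρ := by omega
    rw [hF', hρ'] at h
    rw [h]
    exact Nat.mul_comm _ _
  have hidR : (ρ:ℝ) * (F.choose ρ : ℝ) = (F:ℝ) * ((F-1).choose (ρ-1) : ℝ) := by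
    exact_mod_cast hid
  -- main ratio bound
  have hratio : Real.exp (-2) ≤ ((F - kf - 1).choose (ρ-1) : ℝ) / ((F-1).choose (ρ-1)) := by
    have hd1 : ((F - kf - 1).choose (ρ-1) : ℝ) / ((F-1).choose (ρ-1))
        = ((F - kf - 1).descFactorial (ρ-1) : ℝ) / ((F-1).descFactorial (ρ-1)) := by
      rw [Nat.descFactorial_eq_factorial_mul_choose, Nat.descFactorial_eq_factorial_mul_choose]
      push_cast
      have hfac : ((Nat.factorial (ρ-1) : ℕ) : ℝ) ≠ 0 := by
        exact_mod_cast Nat.factorial_ne_zero (ρ-1)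
      rw [mul_div_mul_left _ _ hfac]
    rw [hd1, Nat.descFactorial_eq_prod_range, Nat.descFactorial_eq_prod_range]
    push_cast
    rw [← Finset.prod_div_distrib]
    calc Real.exp (-2) ≤ (1 - 1/(ρ:ℝ)) ^ (ρ-1) := exp_neg_two_le ρ hρ
      _ ≤ ∏ i ∈ range (ρ-1), ((F - kf - 1 - i : ℕ) : ℝ) / ((F - 1 - i : ℕ) : ℝ) := by
          have hpc : ∏ _i ∈ range (ρ-1), (1 - 1/(ρ:ℝ)) = (1 - 1/(ρ:ℝ)) ^ (ρ-1) := by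
            rw [Finset.prod_const, Finset.card_range]
          rw [← hpc]
          apply Finset.prod_le_prod
          · intro i hi
            simp only [Finset.mem_range] at hi
            have hρ2 : 2 ≤ ρ := by omega
            have : 1/(ρ:ℝ) ≤ 1/2 := by
              rw [div_le_div_iff₀ hρpos (by norm_num)]
              exact_mod_cast by omega
            linarith
          · intro i hi
            simp only [Finset.mem_range] at hi
            have hiρ : i + 2 ≤ ρ := by omega
            have hBn : 0 < F - 1 - i := by omega
            have hBpos : (0:ℝ) < ((F - 1 - i : ℕ) : ℝ) := by exact_mod_cast hBn
            rw [le_div_iff₀ hBpos]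
            have hAB : (F - kf - 1 - i) + kf = F - 1 - i := by omega
            have hABR : ((F - kf - 1 - i : ℕ) : ℝ) = ((F - 1 - i : ℕ) : ℝ) - kf := by
              have := congrArg (fun n : ℕ => (n : ℝ)) hAB
              push_cast at this
              linarith
            have hkBn : kf * ρ ≤ F - 1 - i := by omega
            have hkB : (kf:ℝ) * ρ ≤ ((F - 1 - i : ℕ) : ℝ) := by exact_mod_cast hkBn
            have hdivk : (kf:ℝ) ≤ ((F - 1 - i : ℕ) : ℝ) / ρ := by
              rw [le_div_iff₀ hρpos]; exact hkB
            have hexpand : (1 - 1/(ρ:ℝ)) * ((F - 1 - i : ℕ) : ℝ)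
                = ((F - 1 - i : ℕ) : ℝ) - ((F - 1 - i : ℕ) : ℝ) / ρ := by ring
            rw [hexpand, hABR]
            linarith
  -- assemble
  have h5 : ((F - kf - 1).choose (ρ-1) : ℝ) / (F.choose ρ)
      = ((ρ:ℝ)/F) * (((F - kf - 1).choose (ρ-1) : ℝ) / ((F-1).choose (ρ-1))) := by
    rw [div_mul_div_comm, ← hidR, mul_div_mul_left _ _ (ne_of_gt hρpos)]
  rw [h5]
  have he : (0:ℝ) < Real.exp (-2) := Real.exp_pos _
  have h6 : (ρ:ℝ)/(2*F) ≤ (ρ:ℝ)/F := by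
    rw [div_le_div_iff₀ (by linarith : (0:ℝ) < 2*F) hFpos]
    nlinarith [mul_pos hρpos hFpos]
  calc ((ρ:ℝ) / (2*F)) * Real.exp (-2) ≤ ((ρ:ℝ)/F) * Real.exp (-2) := by
        apply mul_le_mul_of_nonneg_right h6 (le_of_lt he)
    _ ≤ ((ρ:ℝ)/F) * (((F - kf - 1).choose (ρ-1) : ℝ) / ((F-1).choose (ρ-1))) := by
        apply mul_le_mul_of_nonneg_left hratio
        positivity

theorem stmt_5 (F kf ρ : ℕ) (hF : 0 < F) (hkf : 2 ≤ kf) (hρ : 0 < ρ)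
    (hkfF : (kf : ℝ) ≤ F / 2) (hρF : (ρ : ℝ) ≤ (F : ℝ) / (2 * kf))
    (α : ℝ) (hα0 : 0 < α) (hα1 : α ≤ 1)
    (h : ℕ → ℝ)
    (hdef : ∀ x : ℕ, h x = ∑ ℓ ∈ Finset.range (x + 1),
      (x.choose ℓ : ℝ) * α ^ ℓ * (1 - α) ^ (x - ℓ) *
        (1 - ((F - ℓ - 1).choose (ρ - 1) : ℝ) / (F.choose ρ : ℝ))) :
    α - (h kf - (1 - α) * h (kf - 1)) ≥ (α * ρ / (2 * F)) * Real.exp (-2) := by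
  -- nat versions of hypotheses
  have h2k : 2 * kf ≤ F := by
    have : (2:ℝ) * kf ≤ F := by linarith
    exact_mod_cast this
  have h2kρ : 2 * (kf * ρ) ≤ F := by
    have hk0 : (0:ℝ) < 2 * kf := by positivity
    have h1 : (ρ:ℝ) * (2 * kf) ≤ F := by
      rw [← le_div_iff₀ hk0]; exact hρF
    have h2 : (2:ℝ) * (kf * ρ) ≤ F := by nlinarith
    exact_mod_cast h2
  set c : ℕ → ℝ := fun ℓ => ((F - ℓ - 1).choose (ρ-1) : ℝ) / (F.choose ρ) with hc
  have hCF : 0 < F.choose ρ := Nat.choose_pos (by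
    have hρm : 2 * ρ ≤ kf * ρ := Nat.mul_le_mul_right ρ hkf
    omega)
  have hCpos : (0:ℝ) < (F.choose ρ : ℝ) := by exact_mod_cast hCF
  have hc0 : ∀ ℓ, 0 ≤ c ℓ := by intro ℓ; simp only [hc]; positivity
  -- binomial sums equal 1
  have hsum1 : ∀ x:ℕ, ∑ ℓ ∈ range (x+1), (x.choose ℓ:ℝ) * α^ℓ * (1-α)^(x-ℓ) = 1 := by
    intro x
    calc ∑ ℓ ∈ range (x+1), (x.choose ℓ:ℝ) * α^ℓ * (1-α)^(x-ℓ)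
        = ∑ ℓ ∈ range (x+1), α^ℓ * (1-α)^(x-ℓ) * (x.choose ℓ:ℝ) := by
          apply Finset.sum_congr rfl; intros; ring
      _ = (α + (1-α))^x := (add_pow α (1-α) x).symm
      _ = 1 := by norm_num
  -- rewrite h as 1 - S
  have hS : ∀ x:ℕ, h x = 1 - ∑ ℓ ∈ range (x+1), (x.choose ℓ:ℝ) * α^ℓ * (1-α)^(x-ℓ) * c ℓ := by
    intro x
    rw [hdef x]
    have : ∑ ℓ ∈ range (x + 1), (x.choose ℓ : ℝ) * α ^ ℓ * (1 - α) ^ (x - ℓ) *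
        (1 - ((F - ℓ - 1).choose (ρ - 1) : ℝ) / (F.choose ρ : ℝ))
        = ∑ ℓ ∈ range (x+1), ((x.choose ℓ:ℝ) * α^ℓ * (1-α)^(x-ℓ)
            - (x.choose ℓ:ℝ) * α^ℓ * (1-α)^(x-ℓ) * c ℓ) := by
      apply Finset.sum_congr rfl; intro ℓ _; simp only [hc]; ring
    rw [this, Finset.sum_sub_distrib, hsum1 x]
  obtain ⟨k', rfl⟩ : ∃ k', kf = k' + 1 := ⟨kf - 1, by omega⟩
  have hk1 : k' + 1 - 1 = k' := by omega
  rw [hS, hk1, hS]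
  -- goal now in terms of sums; reduce to S(k'+1) - (1-α) S k' ≥ rhs
  have hkey : (∑ ℓ ∈ range (k'+1+1), ((k'+1).choose ℓ:ℝ) * α^ℓ * (1-α)^(k'+1-ℓ) * c ℓ)
      - (1-α) * ∑ ℓ ∈ range (k'+1), (k'.choose ℓ:ℝ) * α^ℓ * (1-α)^(k'-ℓ) * c ℓ
      = ∑ i ∈ range (k'+1), (k'.choose i:ℝ) * α^(i+1) * (1-α)^(k'-i) * c (i+1) := by
    have e1 : (1-α) * ∑ ℓ ∈ range (k'+1), (k'.choose ℓ:ℝ) * α^ℓ * (1-α)^(k'-ℓ) * c ℓ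
        = ∑ ℓ ∈ range (k'+2), (k'.choose ℓ:ℝ) * α^ℓ * (1-α)^(k'+1-ℓ) * c ℓ := by
      conv_rhs => rw [Finset.sum_range_succ]
      have hlast : ((k'.choose (k'+1)):ℝ) * α^(k'+1) * (1-α)^(k'+1-(k'+1)) * c (k'+1) = 0 := by
        simp [Nat.choose_succ_self]
      rw [hlast, add_zero, Finset.mul_sum]
      apply Finset.sum_congr rfl
      intro ℓ hℓ
      simp only [Finset.mem_range] at hℓ
      have : k' + 1 - ℓ = (k' - ℓ) + 1 := by omega
      rw [this, pow_succ]
      ring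
    rw [e1, ← Finset.sum_sub_distrib]
    rw [Finset.sum_range_succ']
    have hzero : ((k'+1).choose 0:ℝ) * α^0 * (1-α)^(k'+1-0) * c 0
        - (k'.choose 0:ℝ) * α^0 * (1-α)^(k'+1-0) * c 0 = 0 := by
      simp
    rw [hzero, add_zero]
    apply Finset.sum_congr rfl
    intro i hi
    have hP : ((k'+1).choose (i+1) : ℝ) = (k'.choose i : ℝ) + (k'.choose (i+1) : ℝ) := by
      rw [Nat.choose_succ_succ]; push_cast; ring
    have hE : k' + 1 - (i+1) = k' - i := by omega
    rw [hP, hE]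
    ring
  rw [ge_iff_le]
  have hred : α - ((1 - (∑ ℓ ∈ range (k'+1+1), ((k'+1).choose ℓ:ℝ) * α^ℓ * (1-α)^(k'+1-ℓ) * c ℓ))
      - (1 - α) * (1 - ∑ ℓ ∈ range (k'+1), (k'.choose ℓ:ℝ) * α^ℓ * (1-α)^(k'-ℓ) * c ℓ))
      = ∑ i ∈ range (k'+1), (k'.choose i:ℝ) * α^(i+1) * (1-α)^(k'-i) * c (i+1) := by
    rw [← hkey]; ring
  rw [hred]
  -- lower bound the sum
  have hmono : ∀ i ∈ range (k'+1), (k'.choose i:ℝ) * α^(i+1) * (1-α)^(k'-i) * c (k'+1)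
      ≤ (k'.choose i:ℝ) * α^(i+1) * (1-α)^(k'-i) * c (i+1) := by
    intro i hi
    simp only [Finset.mem_range] at hi
    have h1α : (0:ℝ) ≤ 1 - α := by linarith
    apply mul_le_mul_of_nonneg_left _
      (mul_nonneg (by positivity) (pow_nonneg h1α _))
    simp only [hc]
    apply (div_le_div_iff_of_pos_right hCpos).mpr
    exact_mod_cast Nat.choose_le_choose (ρ-1) (by omega : F - (k'+1) - 1 ≤ F - (i+1) - 1)
  have hlow : c (k'+1) * α ≤ ∑ i ∈ range (k'+1), (k'.choose i:ℝ) * α^(i+1) * (1-α)^(k'-i) * c (i+1) := by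
    calc c (k'+1) * α
        = ∑ i ∈ range (k'+1), (k'.choose i:ℝ) * α^(i+1) * (1-α)^(k'-i) * c (k'+1) := by
          rw [show ∑ i ∈ range (k'+1), (k'.choose i:ℝ) * α^(i+1) * (1-α)^(k'-i) * c (k'+1)
              = (c (k'+1) * α) * ∑ i ∈ range (k'+1), (k'.choose i:ℝ) * α^i * (1-α)^(k'-i) by
            rw [Finset.mul_sum]
            apply Finset.sum_congr rfl
            intro i _
            rw [pow_succ]
            ring]
          rw [hsum1 k', mul_one]
      _ ≤ _ := Finset.sum_le_sum hmono
  have hcbound : ((ρ:ℝ) / (2*F)) * Real.exp (-2) ≤ c (k'+1) := by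
    simp only [hc]
    exact choose_ratio_ge F (k'+1) ρ hρ hkf h2k h2kρ
  calc α * ρ / (2 * F) * Real.exp (-2)
      = α * (((ρ:ℝ) / (2*F)) * Real.exp (-2)) := by ring
    _ ≤ α * c (k'+1) := mul_le_mul_of_nonneg_left hcbound (le_of_lt hα0)
    _ = c (k'+1) * α := by ring
    _ ≤ _ := hlow
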